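/- Let μ : D_4 → K \ {0, 1} satisfy μ_{ikj} = 1/μ_{ijk}, μ_{jik} = 1 - μ_{ijk}, and μ_{ijk} μ_{ikl} = μ_{ijl} for all distinct indices in {1,2,3,4}. Define λ_{ijkl} = μ_{ikl}/μ_{jkl}. Then λ_{jkli} = 1 - λ_{ijkl} for all distinct i, j, k, l, provided μ_{jli}, μ_{kli} ∉ {0, 1}. -/

import Mathlib

/-- Let `μ : D₄ → K ∖ {0,1}` satisfy `μ_{ikj} = 1/μ_{ijk}`, `μ_{jik} = 1 - μ_{ijk}` and
`μ_{ijk} μ_{ikl} = μ_{ijl}` for all distinct indices in `{1,2,3,4}`.  With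
`λ_{ijkl} = μ_{ikl}/μ_{jkl}`, one has `λ_{jkli} = 1 - λ_{ijkl}` for all distinct
`i, j, k, l`, provided `μ_{jli}, μ_{kli} ∉ {0, 1}`. -/
theorem lambda_relation_generic
    (K : Type*) [Field K]
    (μ : Fin 4 → Fin 4 → Fin 4 → K)
    (hrange : ∀ i j k : Fin 4, i ≠ j → i ≠ k → j ≠ k → μ i j k ≠ 0 ∧ μ i j k ≠ 1)
    (hinv : ∀ i j k : Fin 4, i ≠ j → i ≠ k → j ≠ k → μ i k j = (μ i j k)⁻¹)
    (hsub : ∀ i j k : Fin 4, i ≠ j → i ≠ k → j ≠ k → μ j i k = 1 - μ i j k)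
    (hmul : ∀ i j k l : Fin 4, i ≠ j → i ≠ k → i ≠ l → j ≠ k → j ≠ l → k ≠ l →
      μ i j k * μ i k l = μ i j l)
    (lam : Fin 4 → Fin 4 → Fin 4 → Fin 4 → K)
    (hlam : ∀ i j k l : Fin 4, lam i j k l = μ i k l / μ j k l) :
    ∀ i j k l : Fin 4, i ≠ j → i ≠ k → i ≠ l → j ≠ k → j ≠ l → k ≠ l →
      μ j l i ≠ 0 → μ j l i ≠ 1 → μ k l i ≠ 0 → μ k l i ≠ 1 →
      lam j k l i = 1 - lam i j k l := by
  intro i j k l hij hik hil hjk hjl hkl h0 h1 h2 h3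
  set a := μ l j k with ha
  set b := μ l k i with hb
  obtain ⟨ha0, ha1⟩ := hrange l j k hjl.symm hkl.symm hjk
  obtain ⟨hb0, hb1⟩ := hrange l k i hkl.symm hil.symm hik.symm
  obtain ⟨hjlk0, hjlk1⟩ := hrange j l k hjl hjk hkl.symm
  obtain ⟨hilk0, hilk1⟩ := hrange i l k hil hik hkl.symm
  have e1 : μ l j i = a * b := (hmul l j k i hjl.symm hkl.symm hil.symm hjk hij.symm hik.symm).symm
  have e2 : μ j l i = 1 - a * b := by rw [hsub l j i hjl.symm hil.symm hij.symm, e1]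
  have e3 : μ k l i = 1 - b := by rw [hsub l k i hkl.symm hil.symm hik.symm]
  have ejlk : μ j l k = 1 - a := by rw [hsub l j k hjl.symm hkl.symm hjk]
  have e4 : μ j k l = (1 - a)⁻¹ := by rw [hinv j l k hjl hjk hkl.symm, ejlk]
  have elik : μ l i k = b⁻¹ := by rw [hinv l k i hkl.symm hil.symm hik.symm]
  have eilk : μ i l k = 1 - b⁻¹ := by rw [hsub l i k hil.symm hkl.symm hik, elik]
  have e5 : μ i k l = (1 - b⁻¹)⁻¹ := by rw [hinv i l k hil hik hkl.symm, eilk]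
  have hd1 : (1 : K) - b ≠ 0 := by rw [← e3]; exact h2
  have hd2 : (1 : K) - a ≠ 0 := by rw [← ejlk]; exact hjlk0
  have hd3 : (1 : K) - b⁻¹ ≠ 0 := by rw [← eilk]; exact hilk0
  rw [hlam, hlam, e2, e3, e4, e5]
  have hd1' : (-1 : K) + b ≠ 0 := fun h => hd1 (by linear_combination -h)
  have hd2' : (-1 : K) + a ≠ 0 := fun h => hd2 (by linear_combination -h)
  have hbinv : (-1 + b) * (-1 + b)⁻¹ = 1 := mul_inv_cancel₀ hd1'
  field_simp
  have hb0' : b ≠ 0 := hb0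
  field_simp
  linear_combination (a * b - b) * hbinv
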